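/- Classical symmetric rotor equations: let d : ℝ → M₄(ℂ) be a self-consistent trajectory and define Ω₁(t) := Re Tr(d(t)·A↓A↑), Ω₂(t) := Im Tr(d(t)·A↓A↑), and Ω₃(t) := 2(μ−λ) + γ·(1 − Re Tr(d(t)·(n↑+n↓))). Then Ω₁, Ω₂, Ω₃ are differentiable and satisfy, for every t ∈ ℝ: Ω₁′(t) = −Ω₃(t)·Ω₂(t), Ω₂′(t) = Ω₃(t)·Ω₁(t), and Ω₃′(t) = 0. -/

import Mathlib

open Matrix
open scoped ComplexOrder

noncomputable section

/-- `M₄(ℂ)`, the algebra of 4×4 complex matrices, identified with the linear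
operators on the one-site fermionic Fock space `ℂ⁴`. -/
abbrev M4 : Type := Matrix (Fin 4) (Fin 4) ℂ

noncomputable instance : NormedAddCommGroup M4 := Matrix.normedAddCommGroup
noncomputable instance : NormedSpace ℝ M4 := Matrix.normedSpace

/-- The canonical anticommutation relations for the two matrices `A↑ = Aup`,
`A↓ = Adn`: `Aₛ·Aₜ + Aₜ·Aₛ = 0` and `Aₛ·Aₜ* + Aₜ*·Aₛ = δ_{s,t}·1` for
`s, t ∈ {↑,↓}`. -/
def CAR (Aup Adn : M4) : Prop :=
  Aup * Aup + Aup * Aup = 0 ∧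
  Aup * Adn + Adn * Aup = 0 ∧
  Adn * Adn + Adn * Adn = 0 ∧
  Aup * Aupᴴ + Aupᴴ * Aup = 1 ∧
  Aup * Adnᴴ + Adnᴴ * Aup = 0 ∧
  Adn * Aupᴴ + Aupᴴ * Adn = 0 ∧
  Adn * Adnᴴ + Adnᴴ * Adn = 1

/-- `dh(c) := 2λ n↑n↓ − μ(n↑+n↓) − h(n↑−n↓) − γ(c·A↑*A↓* + c̄·A↓A↑)`,
where `nₛ := Aₛ*·Aₛ`. -/
def dh (Aup Adn : M4) (mu h lam gam : ℝ) (c : ℂ) : M4 :=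
  (2 * lam : ℂ) • (Aupᴴ * Aup * (Adnᴴ * Adn))
    - (mu : ℂ) • (Aupᴴ * Aup + Adnᴴ * Adn)
    - (h : ℂ) • (Aupᴴ * Aup - Adnᴴ * Adn)
    - (gam : ℂ) • (c • (Aupᴴ * Adnᴴ) + (starRingEnd ℂ c) • (Adn * Aup))

/-- A density matrix: Hermitian, positive semidefinite, of trace 1. -/
def IsDensityMatrix (d : M4) : Prop :=
  d.IsHermitian ∧ d.PosSemidef ∧ d.trace = 1

/-- A self-consistent trajectory: a differentiable map `d : ℝ → M₄(ℂ)` such that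
`d t` is a density matrix for all `t` and
`d′(t) = −i·[dh(Tr(d(t)·A↓A↑)), d(t)]` for all `t ∈ ℝ`. -/
def SelfConsistent (Aup Adn : M4) (mu h lam gam : ℝ) (d : ℝ → M4) : Prop :=
  (∀ t : ℝ, IsDensityMatrix (d t)) ∧
  ∀ t : ℝ, HasDerivAt d
      ((-Complex.I) •
        (dh Aup Adn mu h lam gam ((d t * (Adn * Aup)).trace) * d t
          - d t * dh Aup Adn mu h lam gam ((d t * (Adn * Aup)).trace))) t

section aux
variable {a b : M4}

lemma SR.half_zero {x : M4} (h : x + x = 0) : x = 0 := by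
  have h2 : (2:ℂ) • x = 0 := by rw [two_smul]; exact h
  simpa using h2

lemma SR.haa (hc : CAR a b) : a * a = 0 := SR.half_zero hc.1
lemma SR.hbb (hc : CAR a b) : b * b = 0 := SR.half_zero hc.2.2.1
lemma SR.hahah (hc : CAR a b) : aᴴ * aᴴ = 0 := by
  have := congrArg conjTranspose (SR.haa hc); simpa using this
lemma SR.hbhbh (hc : CAR a b) : bᴴ * bᴴ = 0 := by
  have := congrArg conjTranspose (SR.hbb hc); simpa using this
lemma SR.hab (hc : CAR a b) : a * b = -(b * a) := by
  have := hc.2.1; linear_combination (norm := abel) this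
lemma SR.hbhah (hc : CAR a b) : bᴴ * aᴴ = -(aᴴ * bᴴ) := by
  have := congrArg conjTranspose hc.2.1
  simp only [conjTranspose_add, conjTranspose_mul, conjTranspose_zero] at this
  linear_combination (norm := abel) this
lemma SR.haah (hc : CAR a b) : a * aᴴ = 1 - aᴴ * a := by
  have := hc.2.2.2.1; linear_combination (norm := abel) this
lemma SR.habh (hc : CAR a b) : a * bᴴ = -(bᴴ * a) := by
  have := hc.2.2.2.2.1; linear_combination (norm := abel) this
lemma SR.hbah (hc : CAR a b) : b * aᴴ = -(aᴴ * b) := by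
  have := hc.2.2.2.2.2.1; linear_combination (norm := abel) this
lemma SR.hbbh (hc : CAR a b) : b * bᴴ = 1 - bᴴ * b := by
  have := hc.2.2.2.2.2.2; linear_combination (norm := abel) this

lemma SR.haa' (hc : CAR a b) (x : M4) : a * (a * x) = 0 := by
  rw [← mul_assoc, SR.haa hc, zero_mul]
lemma SR.hbb' (hc : CAR a b) (x : M4) : b * (b * x) = 0 := by
  rw [← mul_assoc, SR.hbb hc, zero_mul]
lemma SR.hahah' (hc : CAR a b) (x : M4) : aᴴ * (aᴴ * x) = 0 := by
  rw [← mul_assoc, SR.hahah hc, zero_mul]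
lemma SR.hbhbh' (hc : CAR a b) (x : M4) : bᴴ * (bᴴ * x) = 0 := by
  rw [← mul_assoc, SR.hbhbh hc, zero_mul]
lemma SR.hab' (hc : CAR a b) (x : M4) : a * (b * x) = -(b * (a * x)) := by
  rw [← mul_assoc, SR.hab hc, ← mul_assoc, neg_mul]
lemma SR.hbhah' (hc : CAR a b) (x : M4) : bᴴ * (aᴴ * x) = -(aᴴ * (bᴴ * x)) := by
  rw [← mul_assoc, SR.hbhah hc, ← mul_assoc, neg_mul]
lemma SR.haah' (hc : CAR a b) (x : M4) : a * (aᴴ * x) = x - aᴴ * (a * x) := by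
  rw [← mul_assoc, SR.haah hc, sub_mul, one_mul, ← mul_assoc]
lemma SR.habh' (hc : CAR a b) (x : M4) : a * (bᴴ * x) = -(bᴴ * (a * x)) := by
  rw [← mul_assoc, SR.habh hc, ← mul_assoc, neg_mul]
lemma SR.hbah' (hc : CAR a b) (x : M4) : b * (aᴴ * x) = -(aᴴ * (b * x)) := by
  rw [← mul_assoc, SR.hbah hc, ← mul_assoc, neg_mul]
lemma SR.hbbh' (hc : CAR a b) (x : M4) : b * (bᴴ * x) = x - bᴴ * (b * x) := by
  rw [← mul_assoc, SR.hbbh hc, sub_mul, one_mul, ← mul_assoc]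

lemma SR.comm1 (hc : CAR a b) (mu h lam gam : ℝ) (c : ℂ) :
    (b * a) * dh a b mu h lam gam c - dh a b mu h lam gam c * (b * a)
      = ((2:ℂ) * lam - 2 * mu) • (b * a)
        - ((gam:ℂ) * c) • (1 - aᴴ * a - bᴴ * b) := by
  simp only [dh, mul_add, add_mul, mul_sub, sub_mul, smul_mul_assoc, mul_smul_comm,
    mul_assoc, smul_smul, mul_one, one_mul,
    SR.haa hc, SR.hbb hc, SR.hahah hc, SR.hbhbh hc, SR.hab hc, SR.hbhah hc, SR.haah hc,
    SR.habh hc, SR.hbah hc, SR.hbbh hc,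
    SR.haa' hc, SR.hbb' hc, SR.hahah' hc, SR.hbhbh' hc, SR.hab' hc, SR.hbhah' hc,
    SR.haah' hc, SR.habh' hc, SR.hbah' hc, SR.hbbh' hc,
    mul_zero, zero_mul, smul_zero, zero_smul, mul_neg, neg_mul, smul_neg, neg_neg,
    sub_zero, zero_sub, add_zero, zero_add]
  module

lemma SR.comm2 (hc : CAR a b) (mu h lam gam : ℝ) (c : ℂ) :
    (aᴴ * a + bᴴ * b) * dh a b mu h lam gam c
        - dh a b mu h lam gam c * (aᴴ * a + bᴴ * b)
      = ((-2 : ℂ) * gam * c) • (aᴴ * bᴴ)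
        + ((2:ℂ) * gam * (starRingEnd ℂ c)) • (b * a) := by
  simp only [dh, mul_add, add_mul, mul_sub, sub_mul, smul_mul_assoc, mul_smul_comm,
    mul_assoc, smul_smul, mul_one, one_mul,
    SR.haa hc, SR.hbb hc, SR.hahah hc, SR.hbhbh hc, SR.hab hc, SR.hbhah hc, SR.haah hc,
    SR.habh hc, SR.hbah hc, SR.hbbh hc,
    SR.haa' hc, SR.hbb' hc, SR.hahah' hc, SR.hbhbh' hc, SR.hab' hc, SR.hbhah' hc,
    SR.haah' hc, SR.habh' hc, SR.hbah' hc, SR.hbbh' hc,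
    mul_zero, zero_mul, smul_zero, zero_smul, mul_neg, neg_mul, smul_neg, neg_neg,
    sub_zero, zero_sub, add_zero, zero_add]
  module

lemma SR.hasDerivAt_trace_mul (B : M4) {d : ℝ → M4} {D : M4} {t : ℝ}
    (hD : HasDerivAt d D t) :
    HasDerivAt (fun s => (d s * B).trace) ((D * B).trace) t := by
  let L : M4 →ₗ[ℝ] ℂ :=
    ((Matrix.traceLinearMap (Fin 4) ℂ ℂ).comp (LinearMap.mulRight ℂ B)).restrictScalars ℝ
  have hL : HasFDerivAt (fun m : M4 => (m * B).trace)
      (LinearMap.toContinuousLinearMap L) (d t) :=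
    (LinearMap.toContinuousLinearMap L).hasFDerivAt
  have := hL.comp_hasDerivAt t hD
  exact this

lemma SR.star_trace_mul {d M : M4} (hd : d.IsHermitian) :
    (d * Mᴴ).trace = star ((d * M).trace) := by
  have h1 : star ((d * M).trace) = ((d * M)ᴴ).trace := (Matrix.trace_conjTranspose (d*M)).symm
  rw [h1, conjTranspose_mul, hd.eq, Matrix.trace_mul_comm]

lemma SR.trace_herm_real {d M : M4} (hd : d.IsHermitian) (hM : M.IsHermitian) :
    ((d * M).trace) = (((d * M).trace).re : ℂ) := by
  have h2 : (d * M).trace = star ((d * M).trace) := by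
    conv_lhs => rw [← hM.eq]
    exact SR.star_trace_mul hd
  exact (Complex.conj_eq_iff_re.mp h2.symm).symm

end aux


/-- classical symmetric rotor equations: with
`Ω₁(t) = Re Tr(d(t)·A↓A↑)`, `Ω₂(t) = Im Tr(d(t)·A↓A↑)` and
`Ω₃(t) = 2(μ−λ) + γ·(1 − Re Tr(d(t)·(n↑+n↓)))`, one has
`Ω₁′ = −Ω₃·Ω₂`, `Ω₂′ = Ω₃·Ω₁` and `Ω₃′ = 0`. -/
theorem symmetric_rotor_equations (Aup Adn : M4) (hCAR : CAR Aup Adn)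
    (mu h lam gam : ℝ) (hgam : 0 ≤ gam)
    (d : ℝ → M4) (hd : SelfConsistent Aup Adn mu h lam gam d) :
    ∀ t : ℝ,
      HasDerivAt (fun s : ℝ => ((d s * (Adn * Aup)).trace).re)
        (-((2 * (mu - lam)
              + gam * (1 - ((d t * (Aupᴴ * Aup + Adnᴴ * Adn)).trace).re))
            * ((d t * (Adn * Aup)).trace).im)) t ∧
      HasDerivAt (fun s : ℝ => ((d s * (Adn * Aup)).trace).im)
        ((2 * (mu - lam)
            + gam * (1 - ((d t * (Aupᴴ * Aup + Adnᴴ * Adn)).trace).re))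
          * ((d t * (Adn * Aup)).trace).re) t ∧
      HasDerivAt (fun s : ℝ =>
          2 * (mu - lam)
            + gam * (1 - ((d s * (Aupᴴ * Aup + Adnᴴ * Adn)).trace).re)) 0 t := by
  intro t
  set a := Aup with ha
  set b := Adn with hb
  set c : ℂ := (d t * (b * a)).trace with hcdef
  set H : M4 := dh a b mu h lam gam c with hH
  set D : M4 := (-Complex.I) • (H * d t - d t * H) with hD
  have hderiv : HasDerivAt d D t := hd.2 t
  set N : ℂ := (d t * (aᴴ * a + bᴴ * b)).trace with hN
  have hdH : (d t).IsHermitian := (hd.1 t).1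
  have htr1 : (d t).trace = 1 := (hd.1 t).2.2
  have hNherm : (aᴴ * a + bᴴ * b).IsHermitian := by
    apply Matrix.IsHermitian.add <;>
      simp [Matrix.IsHermitian, conjTranspose_mul]
  have hNreal : N = (N.re : ℂ) := SR.trace_herm_real hdH hNherm
  set Om : ℝ := 2 * (mu - lam) + gam * (1 - N.re) with hOm
  -- trace of commutator transfer
  have keytrace : ∀ B : M4, (D * B).trace
      = (-Complex.I) * ((d t * (B * H - H * B)).trace) := by
    intro B
    rw [hD, smul_mul_assoc, trace_smul]
    congr 1
    rw [sub_mul, trace_sub, mul_sub, trace_sub]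
    congr 1
    · rw [mul_assoc, Matrix.trace_mul_comm H (d t * B), mul_assoc]
    · rw [mul_assoc]
  -- Step A
  have hstepA : (D * (b * a)).trace = Complex.I * (Om : ℂ) * c := by
    rw [keytrace, SR.comm1 hCAR mu h lam gam c]
    rw [mul_sub, mul_smul_comm, mul_smul_comm, trace_sub, trace_smul, trace_smul]
    have e1 : (d t * (1 - aᴴ * a - bᴴ * b)).trace = 1 - N := by
      rw [mul_sub, mul_sub, mul_one, trace_sub, trace_sub, htr1, hN, mul_add, trace_add]
      ring
    rw [e1, ← hcdef, hNreal, hOm]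
    simp only [smul_eq_mul]
    push_cast
    ring
  -- Step B
  have hPtrace : (d t * (aᴴ * bᴴ)).trace = star c := by
    have : (aᴴ * bᴴ) = (b * a)ᴴ := by rw [conjTranspose_mul]
    rw [this, SR.star_trace_mul hdH, ← hcdef]
  have hstepB : (D * (aᴴ * a + bᴴ * b)).trace = 0 := by
    rw [keytrace, SR.comm2 hCAR mu h lam gam c]
    rw [mul_add, mul_smul_comm, mul_smul_comm, trace_add, trace_smul, trace_smul,
      hPtrace, ← hcdef]
    simp only [smul_eq_mul, Complex.star_def]
    ring
  -- derivatives
  have hc' : HasDerivAt (fun s => (d s * (b * a)).trace) (Complex.I * (Om : ℂ) * c) t := by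
    have := SR.hasDerivAt_trace_mul (b * a) hderiv
    rwa [hstepA] at this
  have hn' : HasDerivAt (fun s => (d s * (aᴴ * a + bᴴ * b)).trace) 0 t := by
    have := SR.hasDerivAt_trace_mul (aᴴ * a + bᴴ * b) hderiv
    rwa [hstepB] at this
  have hre : HasDerivAt (fun s => ((d s * (b * a)).trace).re)
      ((Complex.I * (Om : ℂ) * c).re) t := by
    have := Complex.reCLM.hasFDerivAt.comp_hasDerivAt t hc'
    simpa [Function.comp_def] using this
  have him : HasDerivAt (fun s => ((d s * (b * a)).trace).im)
      ((Complex.I * (Om : ℂ) * c).im) t := by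
    have := Complex.imCLM.hasFDerivAt.comp_hasDerivAt t hc'
    simpa [Function.comp_def] using this
  have hnre : HasDerivAt (fun s => ((d s * (aᴴ * a + bᴴ * b)).trace).re) 0 t := by
    have := Complex.reCLM.hasFDerivAt.comp_hasDerivAt t hn'
    simpa [Function.comp_def] using this
  refine ⟨?_, ?_, ?_⟩
  · have : (Complex.I * (Om : ℂ) * c).re = -(Om * c.im) := by
      simp [Complex.mul_re, Complex.mul_im]
    rw [this] at hre
    simpa [hOm, hN, hcdef] using hre
  · have : (Complex.I * (Om : ℂ) * c).im = Om * c.re := by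
      simp [Complex.mul_re, Complex.mul_im]
    rw [this] at him
    simpa [hOm, hN, hcdef] using him
  · have hfin := (((hasDerivAt_const t (1:ℝ)).sub hnre).const_mul gam).const_add
      (2 * (mu - lam))
    simpa using hfin
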